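/- Let $A_1,\dots,A_p$ be symmetric $n\times n$ real matrices ($p\geq 1$). Then $\sum_{k,l=1}^p \big(\mathrm{tr}(A_kA_l)\big)^2 + \sum_{k,l=1}^p \|[A_k,A_l]\|^2 \leq \big(2-\tfrac{1}{p}\big)\Big(\sum_{k=1}^p \mathrm{tr}(A_k^2)\Big)^2$, where $[A_k,A_l]=A_kA_l-A_lA_k$ and $\|B\|^2=\mathrm{tr}(B^TB)$. -/

import Mathlib

open Matrix Finset

section aux

variable {m : Type*} [Fintype m] [DecidableEq m]

/-- Diagonal case of the refined CDK lemma. -/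
lemma diag_key (d : m → ℝ) (C : Matrix m m ℝ) (hC : Cᵀ = C) :
    ((C * diagonal d - diagonal d * C) * (diagonal d * C - C * diagonal d)).trace
      + 2 * ((diagonal d * C).trace)^2
      ≤ 2 * (((diagonal d * diagonal d : Matrix m m ℝ)).trace * (C*C).trace) := by
  have hCs : ∀ i j, C j i = C i j := by
    intro i j
    have h := congrFun (congrFun hC i) j
    rwa [transpose_apply] at h
  have hM : ∀ i j, (diagonal d * C - C * diagonal d) i j = (d i - d j) * C i j := by
    intro i j
    simp [diagonal_mul, mul_diagonal, Matrix.sub_apply]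
    ring
  have hM' : ∀ i j, (C * diagonal d - diagonal d * C) i j = -((d i - d j) * C i j) := by
    intro i j
    simp [diagonal_mul, mul_diagonal, Matrix.sub_apply]
    ring
  have t1 : ((C * diagonal d - diagonal d * C) * (diagonal d * C - C * diagonal d)).trace
      = ∑ i, ∑ j, (d i - d j)^2 * (C i j)^2 := by
    simp only [Matrix.trace, Matrix.diag_apply, Matrix.mul_apply, hM, hM']
    refine Finset.sum_congr rfl fun i _ => Finset.sum_congr rfl fun j _ => ?_
    rw [hCs i j]
    ring
  have t2 : (diagonal d * C).trace = ∑ i, d i * C i i := by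
    simp [Matrix.trace, Matrix.diag_apply, diagonal_mul]
  have t3 : ((diagonal d * diagonal d : Matrix m m ℝ)).trace = ∑ i, (d i)^2 := by
    simp [diagonal_mul_diagonal, Matrix.trace_diagonal, sq]
  have t4 : (C*C).trace = ∑ i, ∑ j, (C i j)^2 := by
    simp only [Matrix.trace, Matrix.diag_apply, Matrix.mul_apply]
    refine Finset.sum_congr rfl fun i _ => Finset.sum_congr rfl fun j _ => ?_
    rw [hCs i j, sq]
  rw [t1, t2, t3, t4]
  set S : ℝ := ∑ i, (d i)^2 with hS
  have hS0 : 0 ≤ S := Finset.sum_nonneg fun i _ => sq_nonneg _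
  have cs : (∑ i, d i * C i i)^2 ≤ S * (∑ i, (C i i)^2) :=
    Finset.sum_mul_sq_le_sq_mul_sq univ d (fun i => C i i)
  have main : (∑ i, ∑ j, (d i - d j)^2 * (C i j)^2) + 2 * S * (∑ i, (C i i)^2)
      ≤ 2 * S * (∑ i, ∑ j, (C i j)^2) := by
    have hdiag : (∑ i, 2 * S * (C i i)^2)
        = ∑ i, ∑ j, (if j = i then 2 * S * (C i j)^2 else 0) := by
      refine Finset.sum_congr rfl fun i _ => ?_
      rw [Finset.sum_ite_eq' univ i (fun j => 2 * S * (C i j)^2)]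
      simp
    calc (∑ i, ∑ j, (d i - d j)^2 * (C i j)^2) + 2 * S * (∑ i, (C i i)^2)
        = ∑ i, ∑ j, ((d i - d j)^2 * (C i j)^2 + (if j = i then 2 * S * (C i j)^2 else 0)) := by
          rw [Finset.mul_sum, hdiag, ← Finset.sum_add_distrib]
          refine Finset.sum_congr rfl fun i _ => ?_
          rw [← Finset.sum_add_distrib]
      _ ≤ ∑ i, ∑ j, 2 * S * (C i j)^2 := by
          refine Finset.sum_le_sum fun i _ => Finset.sum_le_sum fun j _ => ?_
          by_cases h : j = i
          · subst h; simp
          · simp only [if_neg h, add_zero]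
            refine mul_le_mul_of_nonneg_right ?_ (sq_nonneg _)
            have h2 : (d i)^2 + (d j)^2 ≤ S := by
              have hsub : ({i, j} : Finset m) ⊆ univ := Finset.subset_univ _
              have := Finset.sum_le_sum_of_subset_of_nonneg hsub
                (fun k _ _ => sq_nonneg (d k))
              rwa [Finset.sum_pair (fun hij => h hij.symm)] at this
            nlinarith [sq_nonneg (d i + d j)]
      _ = 2 * S * (∑ i, ∑ j, (C i j)^2) := by
          simp only [Finset.mul_sum]
  nlinarith [cs, main]

/-- Refined Chern–do Carmo–Kobayashi lemma. -/
lemma trace_key (A B : Matrix m m ℝ) (hA : Aᵀ = A) (hB : Bᵀ = B) :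
    ((A * B - B * A)ᵀ * (A * B - B * A)).trace + 2 * ((A * B).trace)^2
      ≤ 2 * ((A * A).trace * (B * B).trace) := by
  have hA' : A.IsHermitian := by rwa [IsHermitian, conjTranspose_eq_transpose_of_trivial]
  have hspec := hA'.spectral_theorem
  simp only [RCLike.ofReal_real_eq_id, Function.comp_id, Function.id_comp] at hspec
  set U : Matrix m m ℝ := (hA'.eigenvectorUnitary : Matrix m m ℝ) with hU
  have hUU : U * star U = 1 := mem_unitaryGroup_iff.mp hA'.eigenvectorUnitary.2
  have hUU' : star U * U = 1 := mem_unitaryGroup_iff'.mp hA'.eigenvectorUnitary.2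
  set d := hA'.eigenvalues with hd
  have tr_conj : ∀ X : Matrix m m ℝ, (star U * X * U).trace = X.trace := by
    intro X; rw [trace_mul_comm, ← mul_assoc, hUU, one_mul]
  have cancel : ∀ Z : Matrix m m ℝ, U * (star U * Z) = Z := by
    intro Z; rw [← mul_assoc, hUU, one_mul]
  have conj_mul : ∀ X Y : Matrix m m ℝ,
      star U * (X * Y) * U = (star U * X * U) * (star U * Y * U) := by
    intro X Y
    have : star U * X * U * (star U * Y * U)
        = star U * (X * (U * (star U * (Y * U)))) := by
      simp only [Matrix.mul_assoc]
    rw [this, cancel]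
    simp only [Matrix.mul_assoc]
  have conj_sub : ∀ X Y : Matrix m m ℝ,
      star U * (X - Y) * U = star U * X * U - star U * Y * U := by
    intro X Y
    rw [Matrix.mul_sub, Matrix.sub_mul]
  have hAd : star U * A * U = diagonal d := by
    rw [hspec]
    calc star U * (U * diagonal d * star U) * U
        = (star U * U) * diagonal d * (star U * U) := by
          simp only [Matrix.mul_assoc]
      _ = diagonal d := by rw [hUU', one_mul, mul_one]
  set B' : Matrix m m ℝ := star U * B * U with hB'def
  have hB's : B'ᵀ = B' := by
    have hUstar : (star U)ᵀ = U := by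
      rw [Matrix.star_eq_conjTranspose, conjTranspose_eq_transpose_of_trivial,
        transpose_transpose]
    rw [hB'def, transpose_mul, transpose_mul, hUstar, hB,
      Matrix.star_eq_conjTranspose, conjTranspose_eq_transpose_of_trivial, Matrix.mul_assoc,
      ← Matrix.mul_assoc]
  have e1 : (A * B).trace = (diagonal d * B').trace := by
    rw [← tr_conj (A * B), conj_mul, hAd]
  have e2 : (A * A).trace = ((diagonal d * diagonal d : Matrix m m ℝ)).trace := by
    rw [← tr_conj (A * A), conj_mul, hAd]
  have e3 : (B * B).trace = (B' * B').trace := by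
    rw [← tr_conj (B * B), conj_mul]
  have e4 : ((A * B - B * A)ᵀ * (A * B - B * A)).trace
      = ((B' * diagonal d - diagonal d * B') * (diagonal d * B' - B' * diagonal d)).trace := by
    have ht : (A * B - B * A)ᵀ = B * A - A * B := by
      rw [transpose_sub, transpose_mul, transpose_mul, hA, hB]
    rw [ht, ← tr_conj ((B * A - A * B) * (A * B - B * A)), conj_mul, conj_sub, conj_sub,
      conj_mul, conj_mul, hAd]
  rw [e1, e2, e3, e4]
  exact diag_key d B' hB's

end aux

/-- Simons' algebraic inequality (Lemma 5.3.1 of Simons): for symmetric `n × n`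
matrices `A₁,…,A_p`,
`Σ_{k,l} (tr(AₖAₗ))² + Σ_{k,l} ‖[Aₖ,Aₗ]‖² ≤ (2 - 1/p) (Σₖ tr(Aₖ²))²`,
where `‖B‖² = tr(Bᵀ B)`. -/
theorem stmt_14 (n p : ℕ) (hp : 1 ≤ p) (A : Fin p → Matrix (Fin n) (Fin n) ℝ)
    (hsym : ∀ k, (A k)ᵀ = A k) :
    (∑ k, ∑ l, ((A k * A l).trace) ^ 2) +
      (∑ k, ∑ l, ((A k * A l - A l * A k)ᵀ * (A k * A l - A l * A k)).trace)
    ≤ (2 - 1 / (p : ℝ)) * (∑ k, (A k ^ 2).trace) ^ 2 := by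
  have hpow : ∀ k, (A k ^ 2).trace = (A k * A k).trace := by
    intro k; rw [sq]
  set a : Fin p → ℝ := fun k => (A k * A k).trace with ha
  set S : Fin p → Fin p → ℝ := fun k l => (A k * A l).trace with hSdef
  set N : ℝ := ∑ k, a k with hN
  have hkey : ∀ k l, ((A k * A l - A l * A k)ᵀ * (A k * A l - A l * A k)).trace
      ≤ 2 * (a k * a l) - 2 * (S k l)^2 := by
    intro k l
    have := trace_key (A k) (A l) (hsym k) (hsym l)
    simp only [ha, hSdef]
    linarith
  have step1 : (∑ k, ∑ l, (S k l) ^ 2) +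
      (∑ k, ∑ l, ((A k * A l - A l * A k)ᵀ * (A k * A l - A l * A k)).trace)
      ≤ 2 * N^2 - ∑ k, ∑ l, (S k l)^2 := by
    have h1 : (∑ k, ∑ l, ((A k * A l - A l * A k)ᵀ * (A k * A l - A l * A k)).trace)
        ≤ ∑ k, ∑ l, (2 * (a k * a l) - 2 * (S k l)^2) :=
      Finset.sum_le_sum fun k _ => Finset.sum_le_sum fun l _ => hkey k l
    have hNN : (∑ k, ∑ l, a k * a l) = N^2 := by
      rw [hN, sq, Finset.sum_mul_sum]
    have h2 : (∑ k, ∑ l, (2 * (a k * a l) - 2 * (S k l)^2))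
        = 2 * N^2 - 2 * ∑ k, ∑ l, (S k l)^2 := by
      simp only [Finset.sum_sub_distrib, ← Finset.mul_sum, hNN]
      rw [← Finset.sum_mul, ← hN, ← sq]
    linarith [h1, h2.le, h2.ge]
  have step2 : (∑ k, (a k)^2) ≤ ∑ k, ∑ l, (S k l)^2 := by
    refine Finset.sum_le_sum fun k _ => ?_
    have h := Finset.single_le_sum (f := fun l => (S k l)^2)
      (fun l _ => sq_nonneg _) (Finset.mem_univ k)
    have hak : a k = S k k := rfl
    rw [hak]
    exact h
  have step3 : N^2 ≤ (p : ℝ) * ∑ k, (a k)^2 := by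
    have := sq_sum_le_card_mul_sum_sq (s := (univ : Finset (Fin p))) (f := a)
    simpa [hN, Finset.card_univ] using this
  have hp0 : (0 : ℝ) < p := by positivity
  have hinv : (1 / (p:ℝ)) * p = 1 := by field_simp
  have hinvn : (0:ℝ) ≤ 1 / (p:ℝ) := by positivity
  have step4 : 2 * N^2 - ∑ k, (a k)^2 ≤ (2 - 1 / (p:ℝ)) * N^2 := by
    nlinarith [mul_le_mul_of_nonneg_left step3 hinvn]
  calc (∑ k, ∑ l, ((A k * A l).trace) ^ 2) +
      (∑ k, ∑ l, ((A k * A l - A l * A k)ᵀ * (A k * A l - A l * A k)).trace)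
      ≤ 2 * N^2 - ∑ k, ∑ l, (S k l)^2 := step1
    _ ≤ 2 * N^2 - ∑ k, (a k)^2 := by linarith [step2]
    _ ≤ (2 - 1 / (p:ℝ)) * N^2 := step4
    _ = (2 - 1 / (p : ℝ)) * (∑ k, (A k ^ 2).trace) ^ 2 := by
        rw [hN]
        congr 2
        exact Finset.sum_congr rfl fun k _ => (hpow k).symm
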